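/- Let f : {-1,1}^n → {-1,1} with ‖f̂‖₁ = L. Then H[f] ≤ (4 log₂ L + 11)·Var(f) + 10·I[f]; in particular H[f] ≤ (4 log₂ L + 21)·I[f]. -/

import Mathlib

open Finset Real

noncomputable def chi {n : ℕ} (S : Finset (Fin n)) (x : Fin n → Bool) : ℝ :=
  ∏ i ∈ S, (if x i then (1:ℝ) else -1)

noncomputable def coeff {n : ℕ} (f : (Fin n → Bool) → ℝ) (S : Finset (Fin n)) : ℝ :=
  (∑ x : Fin n → Bool, f x * chi S x) / 2 ^ n

noncomputable def spectralEntropy {n : ℕ} (f : (Fin n → Bool) → ℝ) : ℝ :=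
  ∑ S : Finset (Fin n), (coeff f S) ^ 2 * Real.logb 2 (1 / (coeff f S) ^ 2)

noncomputable def totalInfluence {n : ℕ} (f : (Fin n → Bool) → ℝ) : ℝ :=
  ∑ S : Finset (Fin n), (S.card : ℝ) * (coeff f S) ^ 2

noncomputable def minEntropy {n : ℕ} (f : (Fin n → Bool) → ℝ) : ℝ :=
  ⨅ S : Finset (Fin n), Real.logb 2 (1 / (coeff f S) ^ 2)

noncomputable def fVar {n : ℕ} (f : (Fin n → Bool) → ℝ) : ℝ := 1 - (coeff f ∅) ^ 2

def IsBoolean {n : ℕ} (f : (Fin n → Bool) → ℝ) : Prop := ∀ x, f x = 1 ∨ f x = -1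

noncomputable def binEnt (x : ℝ) : ℝ :=
  x * Real.logb 2 (1 / x) + (1 - x) * Real.logb 2 (1 / (1 - x))

noncomputable def l1Norm {n : ℕ} (f : (Fin n → Bool) → ℝ) : ℝ :=
  ∑ S : Finset (Fin n), |coeff f S|

noncomputable def tensor {n m : ℕ} (f : (Fin n → Bool) → ℝ) (g : (Fin m → Bool) → ℝ) :
    (Fin (n + m) → Bool) → ℝ :=
  fun x => f (fun i => x (Fin.castAdd m i)) * g (fun j => x (Fin.natAdd n j))


lemma chi_mul_chi {n : ℕ} (S : Finset (Fin n)) (x y : Fin n → Bool) :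
    chi S x * chi S y = ∏ i ∈ S, (if x i = y i then (1:ℝ) else -1) := by
  rw [chi, chi, ← Finset.prod_mul_distrib]
  refine Finset.prod_congr rfl fun i _ => ?_
  cases hx : x i <;> cases hy : y i <;> norm_num

lemma sum_chi_chi {n : ℕ} (x y : Fin n → Bool) :
    ∑ S : Finset (Fin n), chi S x * chi S y = if x = y then (2:ℝ)^n else 0 := by
  have h : ∑ S : Finset (Fin n), chi S x * chi S y
      = ∏ i : Fin n, ((if x i = y i then (1:ℝ) else -1) + 1) := by
    rw [Finset.prod_add]
    rw [← Finset.powerset_univ]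
    refine (Finset.sum_congr rfl fun S _ => ?_).symm
    rw [chi_mul_chi]
    simp
  rw [h]
  by_cases hxy : x = y
  · subst hxy
    simp [Fintype.card_fin]
    norm_num
  · have : ∃ i, x i ≠ y i := by
      by_contra hc
      push_neg at hc
      exact hxy (funext hc)
    obtain ⟨i, hi⟩ := this
    rw [if_neg hxy]
    refine Finset.prod_eq_zero (Finset.mem_univ i) ?_
    rw [if_neg hi]; ring

lemma plancherel {n : ℕ} (f g : (Fin n → Bool) → ℝ) :
    ∑ S : Finset (Fin n), coeff f S * coeff g S = (∑ x : Fin n → Bool, f x * g x) / 2 ^ n := by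
  have h1 : ∀ S : Finset (Fin n), coeff f S * coeff g S
      = (∑ x : Fin n → Bool, ∑ y : Fin n → Bool, f x * g y * (chi S x * chi S y)) / (2^n * 2^n) := by
    intro S
    rw [coeff, coeff, div_mul_div_comm, Finset.sum_mul_sum]
    congr 1
    refine Finset.sum_congr rfl fun x _ => Finset.sum_congr rfl fun y _ => by ring
  calc ∑ S : Finset (Fin n), coeff f S * coeff g S
      = (∑ S : Finset (Fin n), ∑ x : Fin n → Bool, ∑ y : Fin n → Bool,
          f x * g y * (chi S x * chi S y)) / (2^n * 2^n) := by
        rw [Finset.sum_congr rfl fun S _ => h1 S, ← Finset.sum_div]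
    _ = (∑ x : Fin n → Bool, ∑ y : Fin n → Bool, f x * g y *
          (∑ S : Finset (Fin n), chi S x * chi S y)) / (2^n * 2^n) := by
        rw [Finset.sum_comm]
        congr 1
        refine Finset.sum_congr rfl fun x _ => ?_
        rw [Finset.sum_comm]
        refine Finset.sum_congr rfl fun y _ => ?_
        rw [Finset.mul_sum]
    _ = (∑ x : Fin n → Bool, f x * g x * 2^n) / (2^n * 2^n) := by
        congr 1
        refine Finset.sum_congr rfl fun x _ => ?_
        rw [Finset.sum_eq_single x]
        · rw [sum_chi_chi, if_pos rfl]
        · intro y _ hy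
          rw [sum_chi_chi, if_neg (Ne.symm hy), mul_zero]
        · intro h; exact absurd (Finset.mem_univ x) h
    _ = (∑ x : Fin n → Bool, f x * g x) / 2 ^ n := by
        rw [← Finset.sum_mul]
        have : (2:ℝ)^n ≠ 0 := by positivity
        field_simp

def flp {n : ℕ} (i : Fin n) (x : Fin n → Bool) : Fin n → Bool :=
  Function.update x i (!(x i))

lemma flp_flp {n : ℕ} (i : Fin n) (x : Fin n → Bool) : flp i (flp i x) = x := by
  funext j
  rcases eq_or_ne j i with h | h
  · subst h; simp [flp, Function.update_apply]
  · simp [flp, Function.update_apply, h]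

lemma flp_involutive {n : ℕ} (i : Fin n) : Function.Involutive (flp (n := n) i) :=
  fun x => flp_flp i x

lemma chi_flp {n : ℕ} (S : Finset (Fin n)) (i : Fin n) (x : Fin n → Bool) :
    chi S (flp i x) = (if i ∈ S then (-1:ℝ) else 1) * chi S x := by
  by_cases hi : i ∈ S
  · rw [if_pos hi, chi, chi, ← Finset.mul_prod_erase S _ hi, ← Finset.mul_prod_erase S _ hi]
    have h1 : ∀ j ∈ S.erase i, (if flp i x j then (1:ℝ) else -1) = (if x j then (1:ℝ) else -1) := by
      intro j hj
      have : j ≠ i := Finset.ne_of_mem_erase hj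
      simp [flp, Function.update_apply, this]
    rw [Finset.prod_congr rfl h1]
    have h2 : (if flp i x i then (1:ℝ) else -1) = -(if x i then (1:ℝ) else -1) := by
      simp only [flp, Function.update_self]
      cases x i <;> norm_num
    rw [h2]; ring
  · rw [if_neg hi, one_mul, chi, chi]
    refine Finset.prod_congr rfl fun j hj => ?_
    have : j ≠ i := fun h => hi (h ▸ hj)
    simp [flp, Function.update_apply, this]

lemma coeff_comp_flp {n : ℕ} (f : (Fin n → Bool) → ℝ) (i : Fin n) (S : Finset (Fin n)) :
    coeff (fun x => f (flp i x)) S = (if i ∈ S then (-1:ℝ) else 1) * coeff f S := by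
  rw [coeff, coeff]
  rw [← Fintype.sum_equiv ((flp_involutive i).toPerm) _ (fun x => f (flp i x) * chi S x)
    (fun x => rfl)]
  have : ∀ x, f (flp i (((flp_involutive i).toPerm) x)) * chi S (((flp_involutive i).toPerm) x)
      = f x * ((if i ∈ S then (-1:ℝ) else 1) * chi S x) := by
    intro x
    have h1 : (((flp_involutive i).toPerm) x) = flp i x := rfl
    rw [h1, flp_flp, chi_flp]
  rw [Fintype.sum_congr _ _ this]
  rw [show ((if i ∈ S then (-1:ℝ) else 1) * ((∑ x : Fin n → Bool, f x * chi S x) / 2 ^ n))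
    = (∑ x : Fin n → Bool, (if i ∈ S then (-1:ℝ) else 1) * (f x * chi S x)) / 2^n by
      rw [← Finset.mul_sum]; ring]
  congr 1
  exact Finset.sum_congr rfl fun x _ => by ring

noncomputable def dERIV {n : ℕ} (f : (Fin n → Bool) → ℝ) (i : Fin n) : (Fin n → Bool) → ℝ :=
  fun x => (f x - f (flp i x)) / 2

lemma coeff_deriv {n : ℕ} (f : (Fin n → Bool) → ℝ) (i : Fin n) (S : Finset (Fin n)) :
    coeff (dERIV f i) S = if i ∈ S then coeff f S else 0 := by
  have h : coeff (dERIV f i) S = (coeff f S - coeff (fun x => f (flp i x)) S) / 2 := by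
    simp only [coeff, dERIV]
    rw [div_sub_div_same, ← Finset.sum_sub_distrib, div_div, mul_comm ((2:ℝ)^n) 2, ← div_div]
    congr 1
    rw [Finset.sum_div]
    exact Finset.sum_congr rfl fun x _ => by ring
  rw [h, coeff_comp_flp]
  by_cases hi : i ∈ S <;> simp [hi] <;> ring

lemma influence_formula {n : ℕ} (f : (Fin n → Bool) → ℝ) :
    totalInfluence f = (∑ i : Fin n, ∑ x : Fin n → Bool, (dERIV f i x)^2) / 2^n := by
  have h1 : ∀ i : Fin n, (∑ x : Fin n → Bool, (dERIV f i x)^2) / 2^n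
      = ∑ S : Finset (Fin n), (if i ∈ S then (coeff f S)^2 else 0) := by
    intro i
    have hp := plancherel (dERIV f i) (dERIV f i)
    have h2 : (∑ x : Fin n → Bool, (dERIV f i x)^2) / 2^n
        = ∑ S : Finset (Fin n), coeff (dERIV f i) S * coeff (dERIV f i) S := by
      rw [hp]; congr 1; exact Finset.sum_congr rfl fun x _ => (sq (dERIV f i x)).symm ▸ by ring
    rw [h2]
    refine Finset.sum_congr rfl fun S _ => ?_
    rw [coeff_deriv]
    by_cases hi : i ∈ S <;> simp [hi] <;> ring
  have h2 : ∀ S : Finset (Fin n), (S.card : ℝ) * (coeff f S)^2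
      = ∑ i : Fin n, (if i ∈ S then (coeff f S)^2 else 0) := by
    intro S
    rw [Finset.sum_ite_mem, Finset.univ_inter, Finset.sum_const, nsmul_eq_mul]
  rw [totalInfluence, Finset.sum_congr rfl fun S _ => h2 S, Finset.sum_comm,
    Finset.sum_congr rfl fun i _ => (h1 i).symm, Finset.sum_div]

lemma deriv_sq_boolean {n : ℕ} {f : (Fin n → Bool) → ℝ} (hf : IsBoolean f) (i : Fin n)
    (x : Fin n → Bool) : (dERIV f i x)^2 = if f x = f (flp i x) then 0 else 1 := by
  rcases hf x with h1|h1 <;> rcases hf (flp i x) with h2|h2 <;>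
    simp [dERIV, h1, h2] <;> norm_num

lemma parseval {n : ℕ} {f : (Fin n → Bool) → ℝ} (hf : IsBoolean f) :
    ∑ S : Finset (Fin n), (coeff f S)^2 = 1 := by
  have h := plancherel f f
  have h1 : ∀ x : Fin n → Bool, f x * f x = 1 := fun x => by
    rcases hf x with hx|hx <;> rw [hx] <;> norm_num
  rw [Finset.sum_congr rfl (fun x _ => h1 x)] at h
  rw [Finset.sum_const, Finset.card_univ] at h
  have h2 : Fintype.card (Fin n → Bool) = 2^n := by simp
  rw [h2] at h
  calc ∑ S : Finset (Fin n), (coeff f S)^2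
      = ∑ S : Finset (Fin n), coeff f S * coeff f S :=
        Finset.sum_congr rfl fun S _ => sq (coeff f S)
    _ = 1 := by
        rw [h]
        have : ((2:ℝ)^n) ≠ 0 := by positivity
        field_simp
        simp

lemma abs_chi_eq_one {n : ℕ} (S : Finset (Fin n)) (x : Fin n → Bool) : |chi S x| = 1 := by
  rw [chi, Finset.abs_prod]
  apply Finset.prod_eq_one
  intro i _
  cases h : x i <;> simp [h]

lemma abs_coeff_le_one {n : ℕ} {f : (Fin n → Bool) → ℝ} (hf : IsBoolean f)
    (S : Finset (Fin n)) : |coeff f S| ≤ 1 := by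
  rw [coeff, abs_div]
  rw [abs_of_pos (by positivity : (0:ℝ) < 2^n)]
  rw [div_le_one (by positivity : (0:ℝ) < 2^n)]
  calc |∑ x : Fin n → Bool, f x * chi S x| ≤ ∑ x : Fin n → Bool, |f x * chi S x| :=
        Finset.abs_sum_le_sum_abs _ _
    _ = ∑ x : Fin n → Bool, (1:ℝ) := by
        refine Finset.sum_congr rfl fun x _ => ?_
        rw [abs_mul, abs_chi_eq_one, mul_one]
        rcases hf x with hx|hx <;> rw [hx] <;> norm_num
    _ = 2^n := by
        rw [Finset.sum_const, Finset.card_univ]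
        simp

def cnt {n : ℕ} (A : Finset (Fin n → Bool)) : ℕ :=
  ∑ x ∈ A, (univ.filter fun i => flp i x ∉ A).card

lemma card_eq_sum_indicator {α : Type*} [Fintype α] [DecidableEq α] (A : Finset α) :
    A.card = ∑ x : α, if x ∈ A then 1 else 0 := by
  rw [Finset.sum_ite_mem, Finset.univ_inter, Finset.sum_const, smul_eq_mul, mul_one]

lemma cnt_eq_sum {n : ℕ} (A : Finset (Fin n → Bool)) :
    cnt A = ∑ x : Fin n → Bool, if x ∈ A then (univ.filter fun i => flp i x ∉ A).card else 0 := by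
  rw [cnt, Finset.sum_ite_mem, Finset.univ_inter]

-- Split of the cube sum
lemma sum_cube_succ {M : Type*} [AddCommMonoid M] {n : ℕ} (F : (Fin (n+1) → Bool) → M) :
    ∑ x : Fin (n+1) → Bool, F x
      = (∑ y : Fin n → Bool, F (Fin.cons false y)) + ∑ y : Fin n → Bool, F (Fin.cons true y) := by
  rw [← Fintype.sum_equiv (Fin.consEquiv (fun _ => Bool)) (fun p => F (Fin.cons p.1 p.2)) F
    (fun p => rfl), Fintype.sum_prod_type, Fintype.sum_bool]
  exact add_comm _ _

lemma flp_cons_zero {n : ℕ} (b : Bool) (y : Fin n → Bool) :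
    flp 0 (Fin.cons b y) = Fin.cons (!b) y := by
  rw [flp, Fin.cons_zero, Fin.update_cons_zero]

lemma flp_cons_succ {n : ℕ} (b : Bool) (y : Fin n → Bool) (j : Fin n) :
    flp j.succ (Fin.cons b y) = Fin.cons b (flp j y) := by
  rw [flp, Fin.cons_succ, flp, Fin.cons_update]

section Split
variable {n : ℕ} (A : Finset (Fin (n+1) → Bool))

def side (b : Bool) : Finset (Fin n → Bool) := univ.filter (fun y => Fin.cons b y ∈ A)

lemma mem_side {b : Bool} {y : Fin n → Bool} : y ∈ side A b ↔ Fin.cons b y ∈ A := by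
  simp [side]

lemma card_split : A.card = (side A false).card + (side A true).card := by
  rw [card_eq_sum_indicator A, sum_cube_succ]
  congr 1
  · rw [card_eq_sum_indicator]
    exact Finset.sum_congr rfl fun y _ => by
      by_cases h : Fin.cons false y ∈ A <;> simp [mem_side, h]
  · rw [card_eq_sum_indicator]
    exact Finset.sum_congr rfl fun y _ => by
      by_cases h : Fin.cons true y ∈ A <;> simp [mem_side, h]

lemma sdiff_card_eq (b : Bool) : ((side A b) \ (side A (!b))).card
    = ∑ y : Fin n → Bool, if y ∈ side A b then (if y ∈ side A (!b) then 0 else 1) else 0 := by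
  rw [card_eq_sum_indicator]
  refine Finset.sum_congr rfl fun y _ => ?_
  by_cases h1 : y ∈ side A b <;> by_cases h2 : y ∈ side A (!b) <;>
    simp [Finset.mem_sdiff, h1, h2]

lemma cnt_side (b : Bool) :
    (∑ y : Fin n → Bool, if Fin.cons b y ∈ A
        then (univ.filter fun i => flp i (Fin.cons b y) ∉ A).card else 0)
      = cnt (side A b) + ((side A b) \ (side A (!b))).card := by
  have key : ∀ y : Fin n → Bool, (univ.filter fun i => flp i (Fin.cons b y) ∉ A).card
      = (if y ∈ side A (!b) then 0 else 1) + (univ.filter fun j => flp j y ∉ side A b).card := by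
    intro y
    rw [Finset.card_filter, Fin.sum_univ_succ, Finset.card_filter]
    congr 1
    · by_cases h : Fin.cons (!b) y ∈ A <;> simp [flp_cons_zero, mem_side, h]
    · refine Finset.sum_congr rfl fun j _ => ?_
      by_cases h : Fin.cons b (flp j y) ∈ A <;> simp [flp_cons_succ, mem_side, h]
  rw [sdiff_card_eq, cnt_eq_sum]
  rw [← Finset.sum_add_distrib]
  refine Finset.sum_congr rfl fun y _ => ?_
  rw [key y]
  by_cases h : Fin.cons b y ∈ A <;> simp [mem_side, h] <;> ring

lemma cnt_split : cnt A = (cnt (side A false) + ((side A false) \ (side A true)).card)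
    + (cnt (side A true) + ((side A true) \ (side A false)).card) := by
  rw [cnt_eq_sum, sum_cube_succ, cnt_side A false, cnt_side A true]
  simp

end Split

lemma cnt_eq_card_pairs {n : ℕ} (A : Finset (Fin n → Bool)) :
    cnt A = ((univ : Finset ((Fin n → Bool) × Fin n)).filter
      fun p => p.1 ∈ A ∧ flp p.2 p.1 ∉ A).card := by
  rw [Finset.card_filter, Fintype.sum_prod_type, cnt_eq_sum]
  refine Finset.sum_congr rfl fun x _ => ?_
  by_cases h : x ∈ A
  · simp [h, Finset.card_filter]
  · simp [h]

lemma cnt_compl {n : ℕ} (A : Finset (Fin n → Bool)) : cnt Aᶜ = cnt A := by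
  rw [cnt_eq_card_pairs, cnt_eq_card_pairs]
  apply Finset.card_bij' (fun p _ => (flp p.2 p.1, p.2)) (fun p _ => (flp p.2 p.1, p.2)) <;>
    intro p hp <;> simp only [Finset.mem_filter, Finset.mem_univ, true_and,
      Finset.mem_compl, flp_flp, not_not] at hp ⊢ <;> tauto

lemma entropy_lb {p : ℝ} (h0 : 0 ≤ p) (h1 : p ≤ 1/2) :
    2 * p * Real.log 2 ≤ -(p * Real.log p + (1-p) * Real.log (1-p)) := by
  have hc := Real.strictConcave_binEntropy.concaveOn
  have h := hc.2 (Set.mem_Icc.2 ⟨le_refl 0, by norm_num⟩)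
    (Set.mem_Icc.2 ⟨by norm_num, by norm_num⟩ : (2⁻¹:ℝ) ∈ Set.Icc (0:ℝ) 1)
    (by linarith : (0:ℝ) ≤ 1 - 2*p) (by linarith : (0:ℝ) ≤ 2*p) (by ring)
  have harg : (1 - 2*p) • (0:ℝ) + (2*p) • (2⁻¹:ℝ) = p := by
    simp only [smul_eq_mul]; ring
  rw [harg, Real.binEntropy_zero, Real.binEntropy_two_inv, smul_eq_mul, smul_eq_mul,
    mul_zero, zero_add] at h
  calc 2 * p * Real.log 2 ≤ Real.binEntropy p := h
    _ = -(p * Real.log p + (1-p) * Real.log (1-p)) := by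
        rw [Real.binEntropy, Real.log_inv, Real.log_inv]; ring

lemma step_aux (a₀ a₁ N : ℝ) (h₀ : 0 ≤ a₀) (h01 : a₀ ≤ a₁) (hN : 0 < N) :
    (a₀+a₁) * Real.logb 2 (2*N/(a₀+a₁))
      ≤ a₀ * Real.logb 2 (N/a₀) + a₁ * Real.logb 2 (N/a₁) + (a₁ - a₀) := by
  rcases eq_or_lt_of_le h₀ with h0|h0
  · -- a₀ = 0
    rw [← h0]
    rcases eq_or_lt_of_le (h0 ▸ h01 : (0:ℝ) ≤ a₁) with h1|h1
    · rw [← h1]; norm_num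
    · rw [zero_add, zero_mul, zero_add, sub_zero, mul_div_assoc,
        Real.logb_mul two_ne_zero (by positivity), Real.logb_self_eq_one one_lt_two]
      ring_nf
      exact le_refl _
  · -- 0 < a₀
    have ha₁ : 0 < a₁ := lt_of_lt_of_le h0 h01
    have hs : 0 < a₀ + a₁ := by linarith
    obtain ⟨p, hp_def⟩ : ∃ p : ℝ, p = a₀ / (a₀ + a₁) := ⟨_, rfl⟩
    have hp0 : 0 < p := hp_def ▸ div_pos h0 hs
    have hp2 : p ≤ 1/2 := by rw [hp_def, div_le_iff₀ hs]; linarith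
    have hps : p * (a₀ + a₁) = a₀ := by rw [hp_def]; field_simp
    have h1ps : (1 - p) * (a₀ + a₁) = a₁ := by rw [hp_def]; field_simp; ring
    have h1p0 : 0 < 1 - p := by
      have : p < 1 := by rw [hp_def, div_lt_one hs]; linarith
      linarith
    have key := entropy_lb hp0.le hp2
    have key3 : 2*a₀*Real.log 2 ≤ -(a₀ * Real.log p + a₁ * Real.log (1-p)) := by
      calc 2*a₀*Real.log 2 = (a₀+a₁) * (2*p*Real.log 2) := by
            conv_lhs => rw [← hps]
            ring
        _ ≤ (a₀+a₁) * (-(p * Real.log p + (1-p) * Real.log (1-p))) :=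
            mul_le_mul_of_nonneg_left key hs.le
        _ = -((p*(a₀+a₁)) * Real.log p + ((1-p)*(a₀+a₁)) * Real.log (1-p)) := by ring
        _ = -(a₀ * Real.log p + a₁ * Real.log (1-p)) := by rw [hps, h1ps]
    have m₀ : a₀ * Real.log a₀ = a₀ * Real.log p + a₀ * Real.log (a₀+a₁) := by
      conv_lhs => rw [← hps, Real.log_mul (ne_of_gt hp0) (ne_of_gt hs)]
      rw [hps]; ring
    have m₁ : a₁ * Real.log a₁ = a₁ * Real.log (1-p) + a₁ * Real.log (a₀+a₁) := by
      conv_lhs => rw [← h1ps, Real.log_mul (ne_of_gt h1p0) (ne_of_gt hs)]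
      rw [h1ps]; ring
    have hl2 : (0:ℝ) < Real.log 2 := Real.log_pos one_lt_two
    have hlog : (a₀+a₁) * Real.log (2*N/(a₀+a₁))
        ≤ a₀ * Real.log (N/a₀) + a₁ * Real.log (N/a₁) + (a₁ - a₀) * Real.log 2 := by
      rw [Real.log_div (by positivity) (ne_of_gt hs),
        Real.log_mul two_ne_zero (ne_of_gt hN),
        Real.log_div (ne_of_gt hN) (ne_of_gt h0),
        Real.log_div (ne_of_gt hN) (ne_of_gt ha₁)]
      nlinarith [key3, m₀, m₁]
    calc (a₀+a₁) * Real.logb 2 (2*N/(a₀+a₁))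
        = ((a₀+a₁) * Real.log (2*N/(a₀+a₁))) / Real.log 2 := by rw [Real.logb]; ring
      _ ≤ (a₀ * Real.log (N/a₀) + a₁ * Real.log (N/a₁) + (a₁ - a₀) * Real.log 2) / Real.log 2 := by
          exact div_le_div_of_nonneg_right hlog hl2.le
      _ = a₀ * Real.logb 2 (N/a₀) + a₁ * Real.logb 2 (N/a₁) + (a₁ - a₀) := by
          rw [Real.logb, Real.logb]; field_simp

lemma step_ineq (a₀ a₁ N : ℝ) (h₀ : 0 ≤ a₀) (h₁ : 0 ≤ a₁) (hN : 0 < N) :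
    (a₀+a₁) * Real.logb 2 (2*N/(a₀+a₁))
      ≤ a₀ * Real.logb 2 (N/a₀) + a₁ * Real.logb 2 (N/a₁) + |a₁ - a₀| := by
  rcases le_total a₀ a₁ with h|h
  · rw [abs_of_nonneg (by linarith)]
    exact step_aux a₀ a₁ N h₀ h hN
  · rw [abs_sub_comm, abs_of_nonneg (by linarith : (0:ℝ) ≤ a₀ - a₁), add_comm a₀ a₁]
    have := step_aux a₁ a₀ N h₁ h hN
    linarith

lemma cnt_ge : ∀ {n : ℕ} (A : Finset (Fin n → Bool)),
    (A.card : ℝ) * Real.logb 2 (2^n / A.card) ≤ (cnt A : ℝ) := by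
  intro n
  induction n with
  | zero =>
    intro A
    have hle : A.card ≤ 1 := by
      have := Finset.card_le_univ A
      simpa using this
    rcases Nat.le_one_iff_eq_zero_or_eq_one.1 hle with h|h <;> rw [h] <;> simp
  | succ n ih =>
    intro A
    have hcard := card_split A
    have hcnt := cnt_split A
    have c1 : ((side A true).card : ℝ) - (side A false).card
        ≤ (((side A true) \ (side A false)).card : ℝ) := by
      have e := Finset.card_sdiff_add_card_inter (side A true) (side A false)
      have hle : ((side A true) ∩ (side A false)).card ≤ (side A false).card :=
        Finset.card_le_card Finset.inter_subset_right
      have e' : ((side A true \ side A false).card : ℝ) + ((side A true ∩ side A false).card : ℝ)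
          = ((side A true).card : ℝ) := by exact_mod_cast e
      have hle' : (((side A true) ∩ (side A false)).card : ℝ) ≤ ((side A false).card : ℝ) := by
        exact_mod_cast hle
      linarith
    have c2 : ((side A false).card : ℝ) - (side A true).card
        ≤ (((side A false) \ (side A true)).card : ℝ) := by
      have e := Finset.card_sdiff_add_card_inter (side A false) (side A true)
      have hle : ((side A false) ∩ (side A true)).card ≤ (side A true).card :=
        Finset.card_le_card Finset.inter_subset_right
      have e' : ((side A false \ side A true).card : ℝ) + ((side A false ∩ side A true).card : ℝ)
          = ((side A false).card : ℝ) := by exact_mod_cast e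
      have hle' : (((side A false) ∩ (side A true)).card : ℝ) ≤ ((side A true).card : ℝ) := by
        exact_mod_cast hle
      linarith
    have habs : |((side A true).card : ℝ) - (side A false).card|
        ≤ (((side A false) \ (side A true)).card : ℝ) + (((side A true) \ (side A false)).card : ℝ) := by
      rw [abs_le]
      have n1 : (0:ℝ) ≤ ((side A true \ side A false).card : ℝ) := Nat.cast_nonneg _
      have n2 : (0:ℝ) ≤ ((side A false \ side A true).card : ℝ) := Nat.cast_nonneg _
      constructor <;> linarith
    have hstep := step_ineq ((side A false).card : ℝ) ((side A true).card : ℝ) (2^n)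
      (Nat.cast_nonneg _) (Nat.cast_nonneg _) (by positivity)
    have ih0 := ih (side A false)
    have ih1 := ih (side A true)
    calc (A.card : ℝ) * Real.logb 2 (2^(n+1) / A.card)
        = (((side A false).card : ℝ) + ((side A true).card : ℝ))
          * Real.logb 2 (2*2^n / (((side A false).card : ℝ) + ((side A true).card : ℝ))) := by
          rw [hcard]
          push_cast
          rw [show (2:ℝ)^(n+1) = 2*2^n by ring]
      _ ≤ ((side A false).card : ℝ) * Real.logb 2 (2^n / ((side A false).card : ℝ))
          + ((side A true).card : ℝ) * Real.logb 2 (2^n / ((side A true).card : ℝ))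
          + |((side A true).card : ℝ) - ((side A false).card : ℝ)| := hstep
      _ ≤ (cnt (side A false) : ℝ) + (cnt (side A true) : ℝ)
          + ((((side A false) \ (side A true)).card : ℝ)
            + (((side A true) \ (side A false)).card : ℝ)) := by linarith
      _ = (cnt A : ℝ) := by rw [hcnt]; push_cast; ring

lemma cnt_real {n : ℕ} (A : Finset (Fin n → Bool)) :
    (cnt A : ℝ) = ∑ x : Fin n → Bool, ∑ i : Fin n,
      (if x ∈ A ∧ flp i x ∉ A then (1:ℝ) else 0) := by
  rw [cnt_eq_sum]
  push_cast
  refine Finset.sum_congr rfl fun x _ => ?_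
  by_cases h : x ∈ A
  · rw [if_pos h, Finset.card_filter]
    push_cast
    exact Finset.sum_congr rfl fun i _ => by
      by_cases hh : flp i x ∉ A <;> simp [hh, h]
  · simp [h]

theorem influence_eq_cnt {n : ℕ} (f : (Fin n → Bool) → ℝ) (hf : IsBoolean f) :
    totalInfluence f = 2 * (cnt (univ.filter fun x => f x = 1) : ℝ) / 2^n := by
  set A := univ.filter (fun x : Fin n → Bool => f x = 1) with hA
  have hmem : ∀ x, x ∈ A ↔ f x = 1 := fun x => by simp [hA]
  have hmem' : ∀ x, x ∉ A → f x = -1 := fun x hx => by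
    rcases hf x with h|h
    · exact absurd ((hmem x).2 h) hx
    · exact h
  have hpoint : ∀ (i : Fin n) (x : Fin n → Bool), (dERIV f i x)^2
      = (if x ∈ A ∧ flp i x ∉ A then (1:ℝ) else 0)
        + (if x ∈ Aᶜ ∧ flp i x ∉ Aᶜ then (1:ℝ) else 0) := by
    intro i x
    rw [deriv_sq_boolean hf]
    by_cases h1 : x ∈ A <;> by_cases h2 : flp i x ∈ A
    · have := (hmem x).1 h1; have := (hmem _).1 h2
      simp_all
    · have e1 := (hmem x).1 h1; have e2 := hmem' _ h2
      rw [e1, e2]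
      norm_num [h1, h2]
    · have e1 := hmem' x h1; have e2 := (hmem _).1 h2
      rw [e1, e2]
      simp only [Finset.mem_compl]
      norm_num [h1, h2]
    · have e1 := hmem' x h1; have e2 := hmem' _ h2
      rw [e1, e2]
      simp only [Finset.mem_compl]
      norm_num [h1, h2]
  rw [influence_formula]
  have : (∑ i : Fin n, ∑ x : Fin n → Bool, (dERIV f i x)^2)
      = (cnt A : ℝ) + (cnt Aᶜ : ℝ) := by
    rw [Finset.sum_comm, cnt_real, cnt_real, ← Finset.sum_add_distrib]
    refine Finset.sum_congr rfl fun x _ => ?_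
    rw [← Finset.sum_add_distrib]
    exact Finset.sum_congr rfl fun i _ => hpoint i x
  rw [this, cnt_compl]
  ring

lemma totalInfluence_nonneg {n : ℕ} (f : (Fin n → Bool) → ℝ) : 0 ≤ totalInfluence f :=
  Finset.sum_nonneg fun S _ => by positivity

lemma coeff_empty_eq {n : ℕ} (f : (Fin n → Bool) → ℝ) (hf : IsBoolean f) :
    coeff f ∅ = (2 * (((univ.filter fun x : Fin n → Bool => f x = 1).card : ℝ)) - 2^n) / 2^n := by
  rw [coeff]
  congr 1
  calc ∑ x : Fin n → Bool, f x * chi ∅ x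
      = ∑ x : Fin n → Bool, (2*(if x ∈ (univ.filter fun x : Fin n → Bool => f x = 1) then (1:ℝ) else 0) - 1) := by
        refine Finset.sum_congr rfl fun x _ => ?_
        rcases hf x with h|h <;> simp [chi, h] <;> norm_num
    _ = 2 * (((univ.filter fun x : Fin n → Bool => f x = 1).card : ℝ)) - 2^n := by
        rw [Finset.sum_sub_distrib, ← Finset.mul_sum, Finset.sum_ite_mem, Finset.univ_inter,
          Finset.sum_const, Finset.sum_const]
        simp [Finset.card_univ]

lemma card_compl_real {n : ℕ} (A : Finset (Fin n → Bool)) :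
    ((Aᶜ).card : ℝ) = 2^n - (A.card : ℝ) := by
  have h1 := Finset.card_add_card_compl A
  have h2 : Fintype.card (Fin n → Bool) = 2^n := by simp
  rw [h2] at h1
  have h3 : (A.card : ℝ) + (Aᶜ.card : ℝ) = 2^n := by exact_mod_cast h1
  linarith

lemma fVar_eq {n : ℕ} (f : (Fin n → Bool) → ℝ) (hf : IsBoolean f) :
    fVar f = 4 * (((univ.filter fun x : Fin n → Bool => f x = 1).card : ℝ)/2^n)
      * ((((univ.filter fun x : Fin n → Bool => f x = 1)ᶜ).card : ℝ)/2^n) := by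
  rw [fVar, coeff_empty_eq f hf, card_compl_real]
  have hN : (0:ℝ) < 2^n := by positivity
  field_simp
  ring

lemma iso_aux (I v α : ℝ) (hα0 : 0 ≤ α) (hα : α ≤ 1/2) (hv : v = 4*α*(1-α))
    (hI : 2*α*Real.logb 2 (1/α) ≤ I) (hI0 : 0 ≤ I) :
    v * Real.logb 2 (1/v) ≤ 2*I := by
  rcases eq_or_lt_of_le hα0 with h0|h0
  · rw [hv, ← h0]
    norm_num
    linarith
  · have hv0 : 0 < v := by rw [hv]; nlinarith
    have hv1 : v ≤ 1 := by nlinarith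
    have hv2 : 2*α ≤ v := by nlinarith
    have hv4 : v ≤ 4*α := by nlinarith
    have hlog0 : 0 ≤ Real.logb 2 (1/v) :=
      Real.logb_nonneg one_lt_two (by rw [le_div_iff₀ hv0]; linarith)
    have hmono : Real.logb 2 (1/v) ≤ Real.logb 2 (1/(2*α)) :=
      Real.logb_le_logb_of_le one_lt_two (by positivity)
        (one_div_le_one_div_of_le (by linarith) hv2)
    have step1 : v * Real.logb 2 (1/v) ≤ (4*α) * Real.logb 2 (1/(2*α)) :=
      mul_le_mul hv4 hmono hlog0 (by linarith)
    have step2 : Real.logb 2 (1/(2*α)) = Real.logb 2 (1/α) - 1 := by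
      rw [show (1:ℝ)/(2*α) = (1/α) / 2 by field_simp,
        Real.logb_div (by positivity) two_ne_zero, Real.logb_self_eq_one one_lt_two]
    calc v * Real.logb 2 (1/v) ≤ (4*α) * Real.logb 2 (1/(2*α)) := step1
      _ = 4*α*Real.logb 2 (1/α) - 4*α := by rw [step2]; ring
      _ ≤ 4*α*Real.logb 2 (1/α) := by linarith
      _ ≤ 2*I := by linarith

theorem iso {n : ℕ} (f : (Fin n → Bool) → ℝ) (hf : IsBoolean f) :
    fVar f * Real.logb 2 (1 / fVar f) ≤ 2 * totalInfluence f := by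
  have hN : (0:ℝ) < 2^n := by positivity
  have hIc := influence_eq_cnt f hf
  have hI0 := totalInfluence_nonneg f
  have hvar := fVar_eq f hf
  set A := univ.filter (fun x : Fin n → Bool => f x = 1) with hA
  have hcc := card_compl_real A
  have hca : (0:ℝ) ≤ (A.card : ℝ) := Nat.cast_nonneg _
  have hcb : (0:ℝ) ≤ (Aᶜ.card : ℝ) := Nat.cast_nonneg _
  rcases le_total ((A.card : ℝ)) ((Aᶜ.card : ℝ)) with hle|hle
  · apply iso_aux (totalInfluence f) (fVar f) ((A.card:ℝ)/2^n)
    · positivity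
    · rw [div_le_div_iff₀ hN (by norm_num : (0:ℝ) < 2)]; linarith
    · rw [hvar, hcc]; field_simp
    · have hge := cnt_ge A
      rw [hIc, one_div_div]
      calc 2*((A.card:ℝ)/2^n)*Real.logb 2 ((2:ℝ)^n/(A.card:ℝ))
          = (2/2^n) * ((A.card:ℝ) * Real.logb 2 ((2:ℝ)^n/(A.card:ℝ))) := by ring
        _ ≤ (2/2^n) * (cnt A : ℝ) := mul_le_mul_of_nonneg_left hge (by positivity)
        _ = 2 * (cnt A:ℝ)/2^n := by ring
    · exact hI0
  · have hIc' : totalInfluence f = 2 * (cnt Aᶜ : ℝ) / 2^n := by rw [hIc, ← cnt_compl A]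
    apply iso_aux (totalInfluence f) (fVar f) ((Aᶜ.card:ℝ)/2^n)
    · positivity
    · rw [div_le_div_iff₀ hN (by norm_num : (0:ℝ) < 2)]; linarith
    · rw [hvar, hcc]; field_simp; ring
    · have hge := cnt_ge Aᶜ
      rw [hIc', one_div_div]
      calc 2*((Aᶜ.card:ℝ)/2^n)*Real.logb 2 ((2:ℝ)^n/(Aᶜ.card:ℝ))
          = (2/2^n) * ((Aᶜ.card:ℝ) * Real.logb 2 ((2:ℝ)^n/(Aᶜ.card:ℝ))) := by ring
        _ ≤ (2/2^n) * (cnt Aᶜ : ℝ) := mul_le_mul_of_nonneg_left hge (by positivity)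
        _ = 2 * (cnt Aᶜ:ℝ)/2^n := by ring
    · exact hI0

lemma ent0 (w : ℝ) (h0 : 0 ≤ w) (h1 : w ≤ 1) :
    (1-w) * Real.logb 2 (1/(1-w)) ≤ (3/2)*w := by
  rcases eq_or_lt_of_le h1 with he|hlt
  · rw [← he]; norm_num [Real.logb]; linarith
  · have hpos : 0 < 1 - w := by linarith
    have hlog : Real.log (1/(1-w)) ≤ 1/(1-w) - 1 := Real.log_le_sub_one_of_pos (by positivity)
    have hlog2 : (0:ℝ) < Real.log 2 := Real.log_pos one_lt_two
    have h23 : (2/3 : ℝ) ≤ Real.log 2 := by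
      have := Real.log_two_gt_d9; linarith
    have key : (1-w) * Real.log (1/(1-w)) ≤ w := by
      calc (1-w)*Real.log (1/(1-w)) ≤ (1-w)*(1/(1-w) - 1) :=
            mul_le_mul_of_nonneg_left hlog hpos.le
        _ = w := by field_simp; ring
    rw [Real.logb]
    calc (1-w) * (Real.log (1/(1-w))/Real.log 2) = ((1-w) * Real.log (1/(1-w)))/Real.log 2 := by
          ring
      _ ≤ w / Real.log 2 := div_le_div_of_nonneg_right key hlog2.le
      _ ≤ (3/2)*w := by
          rw [div_le_iff₀ hlog2]
          nlinarith

lemma small_term (t c : ℝ) (hc : 0 ≤ c) (ht : |t| ≤ c) :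
    t^2 * Real.logb 2 (1/t^2) ≤ 4*Real.sqrt c*|t|/Real.log 2 := by
  have hlog2 : (0:ℝ) < Real.log 2 := Real.log_pos one_lt_two
  rcases eq_or_ne t 0 with h0|h0
  · rw [h0]; simp
  · set u := |t| with hu_def
    have hu : 0 < u := abs_pos.2 h0
    set w := Real.sqrt u with hw_def
    have hw : 0 < w := Real.sqrt_pos.2 hu
    have hwu : w^2 = u := Real.sq_sqrt hu.le
    have ht2 : t^2 = u^2 := (sq_abs t).symm
    have hlogt : Real.log (1/t^2) = 4 * Real.log (1/w) := by
      rw [one_div, Real.log_inv, ht2, ← hwu]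
      rw [show (w^2)^2 = w^4 by ring, Real.log_pow, one_div, Real.log_inv]
      push_cast; ring
    have hlw : Real.log (1/w) ≤ 1/w - 1 := Real.log_le_sub_one_of_pos (by positivity)
    have hwc : w ≤ Real.sqrt c := by
      rw [hw_def]; exact Real.sqrt_le_sqrt ht
    have key : u^2 * (4 * Real.log (1/w)) ≤ 4*Real.sqrt c*u := by
      have s1 : u^2 * (4 * Real.log (1/w)) ≤ u^2 * (4*(1/w - 1)) := by
        apply mul_le_mul_of_nonneg_left (by linarith) (by positivity)
      have s2 : u^2 * (4*(1/w - 1)) ≤ u^2 * (4*(1/w)) := by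
        apply mul_le_mul_of_nonneg_left (by nlinarith) (by positivity)
      have s3 : u^2 * (4*(1/w)) = 4*(u*w) := by
        rw [← hwu]; field_simp
      have s4 : 4*(u*w) ≤ 4*(Real.sqrt c*u) := by nlinarith
      linarith
    rw [Real.logb, ht2]
    rw [show (1:ℝ)/u^2 = 1/t^2 by rw [ht2]]
    calc u^2 * (Real.log (1/t^2)/Real.log 2) = (u^2 * (4 * Real.log (1/w)))/Real.log 2 := by
          rw [hlogt]; ring
      _ ≤ (4*Real.sqrt c*u)/Real.log 2 := div_le_div_of_nonneg_right key hlog2.le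
      _ = 4*Real.sqrt c*|t|/Real.log 2 := by rw [hu_def]


set_option maxHeartbeats 1000000 in
theorem FEI_const_l1 {n : ℕ} (f : (Fin n → Bool) → ℝ) (hf : IsBoolean f)
    (L : ℝ) (hL : l1Norm f = L) :
    spectralEntropy f ≤ (4 * Real.logb 2 L + 11) * fVar f + 10 * totalInfluence f ∧
    spectralEntropy f ≤ (4 * Real.logb 2 L + 21) * totalInfluence f := by

  subst hL
  have hP : ∑ S : Finset (Fin n), (coeff f S)^2 = 1 := parseval hf
  have hI0 : 0 ≤ totalInfluence f := totalInfluence_nonneg f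
  have hlog2 : (0:ℝ) < Real.log 2 := Real.log_pos one_lt_two
  have h23 : (2/3:ℝ) ≤ Real.log 2 := by have := Real.log_two_gt_d9; linarith
  have hsq_le_one : (coeff f ∅)^2 ≤ 1 := by
    rw [← hP]
    exact Finset.single_le_sum (f := fun S => (coeff f S)^2) (fun S _ => sq_nonneg _)
      (Finset.mem_univ ∅)
  set v := fVar f with hv_def
  have hv0 : 0 ≤ v := by rw [hv_def, fVar]; linarith
  have hv1 : v ≤ 1 := by rw [hv_def, fVar]; nlinarith [sq_nonneg (coeff f ∅)]
  have hsum_ne : ∑ S ∈ univ.erase ∅, (coeff f S)^2 = v := by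
    have h : (coeff f ∅)^2 + ∑ S ∈ univ.erase ∅, (coeff f S)^2 = 1 := by
      rw [← hP]
      exact Finset.add_sum_erase univ (fun S => (coeff f S)^2) (Finset.mem_univ ∅)
    rw [hv_def, fVar]; linarith
  have habs1 : ∀ S, |coeff f S| ≤ 1 := abs_coeff_le_one hf
  have hL1 : 1 ≤ l1Norm f := by
    rw [l1Norm, ← hP]
    apply Finset.sum_le_sum
    intro S _
    nlinarith [habs1 S, abs_nonneg (coeff f S), sq_abs (coeff f S)]
  have hLpos : 0 < l1Norm f := lt_of_lt_of_le one_pos hL1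
  have hlogL0 : 0 ≤ Real.logb 2 (l1Norm f) := Real.logb_nonneg one_lt_two hL1
  have hvI : v ≤ totalInfluence f := by
    rw [← hsum_ne, totalInfluence]
    calc ∑ S ∈ univ.erase ∅, (coeff f S)^2
        ≤ ∑ S ∈ univ.erase ∅, (S.card:ℝ)*(coeff f S)^2 := by
          apply Finset.sum_le_sum
          intro S hS
          have hSne : S ≠ ∅ := Finset.ne_of_mem_erase hS
          have hc : 1 ≤ S.card := Finset.card_pos.2 (Finset.nonempty_iff_ne_empty.2 hSne)
          have h1 : (1:ℝ) ≤ (S.card:ℝ) := by exact_mod_cast hc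
          nlinarith [sq_nonneg (coeff f S)]
      _ ≤ ∑ S, (S.card:ℝ)*(coeff f S)^2 :=
          Finset.sum_le_sum_of_subset_of_nonneg (Finset.erase_subset _ _)
            (fun S _ _ => by positivity)
  rcases eq_or_lt_of_le hv0 with hv0'|hvpos
  · -- v = 0
    have hzero : ∀ S ∈ univ.erase ∅, (coeff f S)^2 = 0 :=
      (Finset.sum_eq_zero_iff_of_nonneg (fun S _ => sq_nonneg (coeff f S))).1
        (by rw [hsum_ne, ← hv0'])
    have hH : spectralEntropy f = 0 := by
      rw [spectralEntropy, ← Finset.add_sum_erase univ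
        (fun S => (coeff f S)^2 * Real.logb 2 (1/(coeff f S)^2)) (Finset.mem_univ ∅)]
      have h₁ : (coeff f ∅)^2 = 1 := by
        rw [hv_def, fVar] at hv0'; linarith
      rw [h₁, Finset.sum_eq_zero (fun S hS => by rw [hzero S hS]; simp)]
      norm_num
    rw [hH, ← hv0']
    constructor <;> nlinarith [hlogL0, hI0]
  · -- v > 0
    set θ := (v/(4*(l1Norm f)))^2 with hθ_def
    have hθpos : 0 < θ := by positivity
    have hθle : θ ≤ 1 := by
      have h1 : v/(4*(l1Norm f)) ≤ 1/4 := by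
        rw [div_le_div_iff₀ (by positivity) (by norm_num : (0:ℝ) < 4)]
        nlinarith
      nlinarith [div_nonneg hv0 (by positivity : (0:ℝ) ≤ 4*(l1Norm f))]
    have hsqrtθ : Real.sqrt θ = v/(4*(l1Norm f)) := Real.sqrt_sq (by positivity)
    set t : Finset (Fin n) → ℝ := fun S => (coeff f S)^2 * Real.logb 2 (1/(coeff f S)^2)
      with ht_def
    have hsplit : spectralEntropy f = t ∅
        + ∑ S ∈ (univ.erase ∅).filter (fun S => |coeff f S| ≤ θ), t S
        + ∑ S ∈ (univ.erase ∅).filter (fun S => ¬ |coeff f S| ≤ θ), t S := by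
      rw [spectralEntropy, ← Finset.add_sum_erase univ t (Finset.mem_univ ∅),
        ← Finset.sum_filter_add_sum_filter_not (univ.erase ∅) (fun S => |coeff f S| ≤ θ) t,
        add_assoc]
    have hEsq : (coeff f ∅)^2 = 1 - v := by rw [hv_def, fVar]; ring
    have b0 : t ∅ ≤ (3/2)*v := by
      simp only [ht_def]; rw [hEsq]; exact ent0 v hv0 hv1
    have b1 : ∑ S ∈ (univ.erase ∅).filter (fun S => |coeff f S| ≤ θ), t S ≤ (3/2)*v := by
      have hper : ∀ S ∈ (univ.erase ∅).filter (fun S => |coeff f S| ≤ θ),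
          t S ≤ 4*Real.sqrt θ*|coeff f S|/Real.log 2 := by
        intro S hS
        exact small_term (coeff f S) θ hθpos.le (Finset.mem_filter.1 hS).2
      have hsumabs : ∑ S ∈ (univ.erase ∅).filter (fun S => |coeff f S| ≤ θ), |coeff f S|
          ≤ l1Norm f := by
        rw [l1Norm]
        exact Finset.sum_le_sum_of_subset_of_nonneg
          ((Finset.filter_subset _ _).trans ((Finset.erase_subset _ _).trans (subset_refl _)))
          (fun S _ _ => abs_nonneg _)
      calc ∑ S ∈ (univ.erase ∅).filter (fun S => |coeff f S| ≤ θ), t S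
          ≤ ∑ S ∈ (univ.erase ∅).filter (fun S => |coeff f S| ≤ θ),
              4*Real.sqrt θ*|coeff f S|/Real.log 2 := Finset.sum_le_sum hper
        _ = (4*Real.sqrt θ/Real.log 2)
              * ∑ S ∈ (univ.erase ∅).filter (fun S => |coeff f S| ≤ θ), |coeff f S| := by
            rw [Finset.mul_sum]
            exact Finset.sum_congr rfl fun S _ => by ring
        _ ≤ (4*Real.sqrt θ/Real.log 2) * l1Norm f := by
            apply mul_le_mul_of_nonneg_left hsumabs (by positivity)
        _ = v / Real.log 2 := by
            rw [hsqrtθ]; field_simp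
        _ ≤ (3/2)*v := by
            rw [div_le_iff₀ hlog2]; nlinarith
    have hsubsum : ∑ S ∈ (univ.erase ∅).filter (fun S => ¬ |coeff f S| ≤ θ), (coeff f S)^2
        ≤ v := by
      rw [← hsum_ne]
      exact Finset.sum_le_sum_of_subset_of_nonneg (Finset.filter_subset _ _)
        (fun S _ _ => sq_nonneg _)
    have hlogθ : Real.logb 2 (1/θ^2)
        = 8 + 4*Real.logb 2 (l1Norm f) + 4*Real.logb 2 (1/v) := by
      rw [hθ_def]
      rw [show (1:ℝ)/((v/(4*(l1Norm f)))^2)^2 = ((4*(l1Norm f))/v)^4 by field_simp]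
      rw [show ((4*(l1Norm f))/v)^4 = ((4*(l1Norm f))/v)^(4:ℕ) by norm_num]
      rw [Real.logb_pow]
      rw [Real.logb_div (by positivity) (ne_of_gt hvpos)]
      rw [Real.logb_mul (by norm_num : (4:ℝ) ≠ 0) (ne_of_gt hLpos)]
      rw [show Real.logb 2 4 = 2 by
        rw [show (4:ℝ) = 2^(2:ℕ) by norm_num, Real.logb_pow, Real.logb_self_eq_one one_lt_two]
        norm_num]
      rw [one_div, Real.logb_inv]
      push_cast
      ring
    have hlogθ0 : 0 ≤ Real.logb 2 (1/θ^2) := by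
      apply Real.logb_nonneg one_lt_two
      rw [le_div_iff₀ (by positivity)]
      nlinarith
    have b2 : ∑ S ∈ (univ.erase ∅).filter (fun S => ¬ |coeff f S| ≤ θ), t S
        ≤ Real.logb 2 (1/θ^2) * v := by
      have hper : ∀ S ∈ (univ.erase ∅).filter (fun S => ¬ |coeff f S| ≤ θ),
          t S ≤ Real.logb 2 (1/θ^2) * (coeff f S)^2 := by
        intro S hS
        have hgt : θ < |coeff f S| := not_le.1 (Finset.mem_filter.1 hS).2
        have habs_pos : 0 < |coeff f S| := lt_trans hθpos hgt
        have hane : 0 < (coeff f S)^2 := by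
          rw [← sq_abs]; positivity
        have hmono : Real.logb 2 (1/(coeff f S)^2) ≤ Real.logb 2 (1/θ^2) := by
          apply Real.logb_le_logb_of_le one_lt_two (by positivity)
          apply one_div_le_one_div_of_le (by positivity)
          nlinarith [sq_abs (coeff f S)]
        simp only [ht_def]
        calc (coeff f S)^2 * Real.logb 2 (1/(coeff f S)^2)
            ≤ (coeff f S)^2 * Real.logb 2 (1/θ^2) :=
              mul_le_mul_of_nonneg_left hmono (sq_nonneg _)
          _ = Real.logb 2 (1/θ^2) * (coeff f S)^2 := by ring
      calc ∑ S ∈ (univ.erase ∅).filter (fun S => ¬ |coeff f S| ≤ θ), t S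
          ≤ ∑ S ∈ (univ.erase ∅).filter (fun S => ¬ |coeff f S| ≤ θ),
              Real.logb 2 (1/θ^2) * (coeff f S)^2 := Finset.sum_le_sum hper
        _ = Real.logb 2 (1/θ^2)
              * ∑ S ∈ (univ.erase ∅).filter (fun S => ¬ |coeff f S| ≤ θ), (coeff f S)^2 := by
            rw [Finset.mul_sum]
        _ ≤ Real.logb 2 (1/θ^2) * v := mul_le_mul_of_nonneg_left hsubsum hlogθ0
    have hiso := iso f hf
    rw [← hv_def] at hiso
    have e1 : Real.logb 2 (1/θ^2) * v
        = 8*v + 4*Real.logb 2 (l1Norm f)*v + 4*(v*Real.logb 2 (1/v)) := by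
      rw [hlogθ]; ring
    have e2 : (4 * Real.logb 2 (l1Norm f) + 11) * v
        = 4*Real.logb 2 (l1Norm f)*v + 11*v := by ring
    have hmain : spectralEntropy f
        ≤ (4 * Real.logb 2 (l1Norm f) + 11) * v + 10 * totalInfluence f := by
      rw [hsplit, e2]
      linarith [b0, b1, b2, e1, hiso, hI0]
    refine ⟨hmain, ?_⟩
    have e3 : (4 * Real.logb 2 (l1Norm f) + 11) * v
        ≤ (4 * Real.logb 2 (l1Norm f) + 11) * totalInfluence f :=
      mul_le_mul_of_nonneg_left hvI (by linarith)
    have e4 : (4 * Real.logb 2 (l1Norm f) + 11) * totalInfluence f + 10 * totalInfluence f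
        = (4 * Real.logb 2 (l1Norm f) + 21) * totalInfluence f := by ring
    linarith [hmain, e3, e4]
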